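/- Let v⁺ > 0, v⁻ < 0, p⁺ ∈ (0,1), p⁻ = 1 - p⁺, q⁺ := v⁻/(v⁻ - v⁺), q⁻ := 1 - q⁺, and f* := -(p⁺·v⁺ + p⁻·v⁻)/(v⁺·v⁻). Then p⁺·ln(1 + f*·v⁺) + p⁻·ln(1 + f*·v⁻) = p⁺·ln(p⁺/q⁺) + p⁻·ln(p⁻/q⁻), i.e. the expected log-growth per trade at the optimal leverage equals the Kullback–Leibler divergence between the probability distributions {p⁺, p⁻} and {q⁺, q⁻}. -/

import Mathlib

theorem log_growth_at_optimal_leverage_eq_KL (vp vm pp : ℝ) (hvp : 0 < vp) (hvm : vm < 0)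
    (hpp : pp ∈ Set.Ioo (0 : ℝ) 1) (pm qp qm fstar : ℝ)
    (hpm : pm = 1 - pp) (hqp : qp = vm / (vm - vp)) (hqm : qm = 1 - qp)
    (hfstar : fstar = -(pp * vp + pm * vm) / (vp * vm))
    (hgt : qp < pp) :
    pp * Real.log (1 + fstar * vp) + pm * Real.log (1 + fstar * vm)
      = pp * Real.log (pp / qp) + pm * Real.log (pm / qm) := by
  have hvp0 : vp ≠ 0 := ne_of_gt hvp
  have hvm0 : vm ≠ 0 := ne_of_lt hvm
  have hd : vm - vp ≠ 0 := by nlinarith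
  have h1 : 1 + fstar * vp = pp / qp := by
    subst hfstar hpm hqp
    field_simp
    ring
  have hqm' : qm = -vp / (vm - vp) := by
    subst hqm hqp; field_simp; ring
  have h2 : 1 + fstar * vm = pm / qm := by
    subst hfstar hpm
    have hvp0' : -vp ≠ 0 := neg_ne_zero.mpr hvp0
    rw [hqm', div_div_eq_mul_div]
    field_simp
    ring
  rw [h1, h2]
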